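/- Let d ≥ 2, 0 < δ₁ a ≤ 2ε, and u ∈ C^1(ℝ^d) with u = 0 on the ball B(x₀, δ₁ a). Then ∫_{B(x₀,2ε) \ B(x₀, δ₁ a)} |u|² dx ≤ C (∫_{δ₁ a}^{2ε} r^{d-1} dr)(∫_{δ₁ a}^{2ε} s^{1-d} ds) ∫_{B(x₀,2ε) \ B(x₀, δ₁ a)} |∇u|² dx for a constant C depending only on d. -/

import Mathlib

open MeasureTheory Metric
open Set
open scoped ENNReal

lemma euclid_nontrivial (d : ℕ) (hd : 2 ≤ d) : Nontrivial (EuclideanSpace ℝ (Fin d)) :=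
  Module.nontrivial_of_finrank_pos (R := ℝ) (by rw [finrank_euclideanSpace_fin]; omega)

lemma lintegral_polar (d : ℕ) (hd : 2 ≤ d) (f : EuclideanSpace ℝ (Fin d) → ℝ≥0∞)
    (hf : Measurable f) :
    ∫⁻ x, f x = ∫⁻ ω : sphere (0 : EuclideanSpace ℝ (Fin d)) 1,
      ∫⁻ r in Ioi (0:ℝ), ENNReal.ofReal (r ^ (d - 1)) * f (r • (ω : EuclideanSpace ℝ (Fin d)))
        ∂volume ∂((volume : Measure (EuclideanSpace ℝ (Fin d))).toSphere) := by
  haveI : Nontrivial (EuclideanSpace ℝ (Fin d)) := euclid_nontrivial d hd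
  have hdim : Module.finrank ℝ (EuclideanSpace ℝ (Fin d)) = d := finrank_euclideanSpace_fin
  set μ : Measure (EuclideanSpace ℝ (Fin d)) := volume with hμ
  have h0 : ∫⁻ x, f x ∂μ = ∫⁻ x in ({0}ᶜ : Set (EuclideanSpace ℝ (Fin d))), f x ∂μ := by
    rw [← lintegral_add_compl f (MeasurableSet.singleton (0:EuclideanSpace ℝ (Fin d))),
      setLIntegral_measure_zero _ _ (measure_singleton _)]
    simp
  rw [h0, ← lintegral_subtype_comap (MeasurableSet.singleton (0:EuclideanSpace ℝ (Fin d))).compl f]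
  have hmp := (μ.measurePreserving_homeomorphUnitSphereProd)
  set T := homeomorphUnitSphereProd (EuclideanSpace ℝ (Fin d))
  set F : sphere (0:EuclideanSpace ℝ (Fin d)) 1 × Ioi (0:ℝ) → ℝ≥0∞ :=
    fun p => f ((p.2 : ℝ) • (p.1 : EuclideanSpace ℝ (Fin d))) with hF
  have hFmeas : Measurable F := by
    apply hf.comp
    exact (continuous_subtype_val.snd'.smul continuous_subtype_val.fst').measurable
  have hcomp : ∀ x : ({0}ᶜ : Set (EuclideanSpace ℝ (Fin d))), f x = F (T x) := by
    intro x
    have h : ((T.symm) (T x) : EuclideanSpace ℝ (Fin d)) = x := by rw [T.symm_apply_apply]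
    simp only [hF]
    rw [← h]
    rfl
  calc ∫⁻ x : ({0}ᶜ : Set (EuclideanSpace ℝ (Fin d))), f x ∂(μ.comap Subtype.val)
      = ∫⁻ x : ({0}ᶜ : Set (EuclideanSpace ℝ (Fin d))), F (T x) ∂(μ.comap Subtype.val) :=
        lintegral_congr hcomp
    _ = ∫⁻ p, F p ∂(μ.toSphere.prod
          (Measure.volumeIoiPow (Module.finrank ℝ (EuclideanSpace ℝ (Fin d)) - 1))) :=
        hmp.lintegral_comp hFmeas
    _ = ∫⁻ ω : sphere (0:EuclideanSpace ℝ (Fin d)) 1, ∫⁻ r : Ioi (0:ℝ), F (ω, r)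
          ∂(Measure.volumeIoiPow (Module.finrank ℝ (EuclideanSpace ℝ (Fin d)) - 1))
          ∂μ.toSphere := by
        rw [lintegral_prod _ hFmeas.aemeasurable]
    _ = ∫⁻ ω : sphere (0:EuclideanSpace ℝ (Fin d)) 1,
          ∫⁻ r in Ioi (0:ℝ), ENNReal.ofReal (r ^ (d - 1)) *
            f (r • (ω : EuclideanSpace ℝ (Fin d))) ∂volume ∂μ.toSphere := by
        refine lintegral_congr fun ω => ?_
        have hf1 : Measurable (fun r : Ioi (0:ℝ) => ENNReal.ofReal ((r:ℝ) ^ (d - 1))) :=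
          ENNReal.measurable_ofReal.comp ((measurable_subtype_coe).pow_const _)
        have hg1 : Measurable (fun r : Ioi (0:ℝ) => F (ω, r)) :=
          hFmeas.comp measurable_prodMk_left
        have h1 : (∫⁻ (r : Ioi (0:ℝ)), F (ω, r)
            ∂((Measure.comap Subtype.val (volume : Measure ℝ)).withDensity
              fun r : Ioi (0:ℝ) => ENNReal.ofReal ((r:ℝ) ^ (d - 1))))
            = ∫⁻ (r : Ioi (0:ℝ)), ENNReal.ofReal ((r:ℝ) ^ (d - 1)) * F (ω, r)
              ∂(Measure.comap Subtype.val (volume : Measure ℝ)) :=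
          lintegral_withDensity_eq_lintegral_mul _ hf1 hg1
        rw [Measure.volumeIoiPow, hdim, h1]
        exact lintegral_subtype_comap measurableSet_Ioi
          (fun r : ℝ => ENNReal.ofReal (r ^ (d-1)) * f (r • (ω : EuclideanSpace ℝ (Fin d))))

lemma pointwise_bound (d : ℕ) (hd : 2 ≤ d) (ρ R : ℝ) (hρ : 0 < ρ) (hR : ρ ≤ R)
    (v : EuclideanSpace ℝ (Fin d) → ℝ) (hv : ContDiff ℝ 1 v)
    (h0 : ∀ y ∈ ball (0 : EuclideanSpace ℝ (Fin d)) ρ, v y = 0)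
    (ω : EuclideanSpace ℝ (Fin d)) (hω : ‖ω‖ = 1) (r : ℝ) (hr : r ∈ Icc ρ R) :
    ENNReal.ofReal ((v (r • ω))^2) ≤
      (∫⁻ s in Ioc ρ R, ENNReal.ofReal (s ^ (1 - (d:ℝ)))) *
      (∫⁻ s in Ioc ρ R, ENNReal.ofReal (s ^ ((d:ℝ) - 1)) *
        ENNReal.ofReal (‖fderiv ℝ v (s • ω)‖^2)) := by
  obtain ⟨hr1, hr2⟩ := hr
  -- the derivative along the ray
  have hvd : Differentiable ℝ v := hv.differentiable one_ne_zero
  have hcont : Continuous fun s : ℝ => ‖fderiv ℝ v (s • ω)‖ :=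
    ((hv.continuous_fderiv one_ne_zero).comp (continuous_id.smul continuous_const)).norm
  have hderiv : ∀ s : ℝ, HasDerivAt (fun t => v (t • ω)) ((fderiv ℝ v (s • ω)) ω) s := by
    intro s
    have h1 : HasDerivAt (fun t : ℝ => t • ω) ((1:ℝ) • ω) s := (hasDerivAt_id s).smul_const ω
    have := (hvd (s • ω)).hasFDerivAt.comp_hasDerivAt s h1
    simp only [one_smul] at this
    exact this
  -- v (ρ • ω) = 0
  have hvρ : v (ρ • ω) = 0 := by
    have hcl : EqOn v 0 (closure (ball (0 : EuclideanSpace ℝ (Fin d)) ρ)) :=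
      Set.EqOn.closure (fun y hy => h0 y hy) hv.continuous continuous_const
    have : ρ • ω ∈ closure (ball (0 : EuclideanSpace ℝ (Fin d)) ρ) := by
      rw [closure_ball (0 : EuclideanSpace ℝ (Fin d)) hρ.ne']
      simp [mem_closedBall_zero_iff, norm_smul, hω, abs_of_pos hρ]
    exact hcl this
  -- FTC
  have hFTC : v (r • ω) = ∫ s in ρ..r, (fderiv ℝ v (s • ω)) ω := by
    have hint : IntervalIntegrable (fun s => (fderiv ℝ v (s • ω)) ω) volume ρ r := by
      apply Continuous.intervalIntegrable
      exact ((ContinuousLinearMap.apply ℝ ℝ ω).continuous.comp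
        ((hv.continuous_fderiv one_ne_zero).comp (continuous_id.smul continuous_const)))
    have := intervalIntegral.integral_eq_sub_of_hasDerivAt
      (fun s _ => hderiv s) hint
    rw [this, hvρ, sub_zero]
  -- bound by integral of norms
  have habs : |v (r • ω)| ≤ ∫ s in ρ..r, ‖fderiv ℝ v (s • ω)‖ := by
    rw [hFTC]
    calc |∫ s in ρ..r, (fderiv ℝ v (s • ω)) ω|
        ≤ ∫ s in ρ..r, ‖(fderiv ℝ v (s • ω)) ω‖ := by
          simpa using intervalIntegral.norm_integral_le_integral_norm (μ := volume)
            (f := fun s => (fderiv ℝ v (s • ω)) ω) hr1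
      _ ≤ ∫ s in ρ..r, ‖fderiv ℝ v (s • ω)‖ := by
          apply intervalIntegral.integral_mono_on hr1
          · apply Continuous.intervalIntegrable
            exact ((ContinuousLinearMap.apply ℝ ℝ ω).continuous.comp
              ((hv.continuous_fderiv one_ne_zero).comp (continuous_id.smul continuous_const))).norm
          · exact hcont.intervalIntegrable _ _
          · intro s _
            calc ‖(fderiv ℝ v (s • ω)) ω‖ ≤ ‖fderiv ℝ v (s • ω)‖ * ‖ω‖ :=
              (fderiv ℝ v (s • ω)).le_opNorm ω
            _ = ‖fderiv ℝ v (s • ω)‖ := by rw [hω, mul_one]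
  -- Cauchy–Schwarz
  set h : ℝ → ℝ := fun s => ‖fderiv ℝ v (s • ω)‖ with hh
  set M : ℝ := ∫ s in ρ..r, h s with hM
  have hM0 : 0 ≤ M := intervalIntegral.integral_nonneg hr1 (fun s _ => norm_nonneg _)
  have hsq : ENNReal.ofReal ((v (r • ω))^2) ≤ ENNReal.ofReal (M^2) := by
    apply ENNReal.ofReal_le_ofReal
    rw [← sq_abs]
    exact pow_le_pow_left₀ (abs_nonneg _) habs 2
  refine hsq.trans ?_
  have hIntOn : IntegrableOn h (Ioc ρ r) volume := (hcont.intervalIntegrable ρ r).1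
  have hM' : ENNReal.ofReal M = ∫⁻ s in Ioc ρ r, ENNReal.ofReal (h s) := by
    rw [hM, intervalIntegral.integral_of_le hr1]
    exact ofReal_integral_eq_lintegral_ofReal hIntOn
      (Filter.Eventually.of_forall fun s => norm_nonneg _)
  have hMsq : ENNReal.ofReal (M^2) = (∫⁻ s in Ioc ρ r, ENNReal.ofReal (h s)) ^ (2:ℕ) := by
    rw [ENNReal.ofReal_pow hM0, hM']
  rw [hMsq]
  -- set up Hölder
  set F : ℝ → ℝ≥0∞ := fun s => ENNReal.ofReal (s ^ ((1 - (d:ℝ))/2)) with hF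
  set G : ℝ → ℝ≥0∞ := fun s => ENNReal.ofReal (s ^ (((d:ℝ) - 1)/2)) * ENNReal.ofReal (h s) with hG
  have hrpowCOn : ∀ c : ℝ, ContinuousOn (fun s : ℝ => s ^ c) (Ioc ρ r) := by
    intro c
    intro x hx
    exact (Real.continuousAt_rpow_const x c (Or.inl (hρ.trans_le hx.1.le).ne')).continuousWithinAt
  have hFmeas : AEMeasurable F (volume.restrict (Ioc ρ r)) :=
    ENNReal.measurable_ofReal.comp_aemeasurable
      (((hrpowCOn _).aemeasurable measurableSet_Ioc))
  have hGmeas : AEMeasurable G (volume.restrict (Ioc ρ r)) :=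
    (ENNReal.measurable_ofReal.comp_aemeasurable
      ((hrpowCOn _).aemeasurable measurableSet_Ioc)).mul
      (ENNReal.measurable_ofReal.comp hcont.measurable).aemeasurable
  have hFG : ∀ᵐ s ∂(volume.restrict (Ioc ρ r)), ENNReal.ofReal (h s) = (F * G) s := by
    filter_upwards [ae_restrict_mem measurableSet_Ioc] with s hs
    have hs0 : 0 < s := hρ.trans hs.1
    simp only [hF, hG, Pi.mul_apply]
    rw [← mul_assoc, ← ENNReal.ofReal_mul (Real.rpow_nonneg hs0.le _),
      ← Real.rpow_add hs0, show (1 - (d:ℝ))/2 + ((d:ℝ) - 1)/2 = 0 by ring,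
      Real.rpow_zero, ENNReal.ofReal_one, one_mul]
  have hpq : Real.HolderConjugate 2 2 := Real.HolderConjugate.two_two
  have hCS := ENNReal.lintegral_mul_le_Lp_mul_Lq (volume.restrict (Ioc ρ r)) hpq
    hFmeas hGmeas
  have hX : (∫⁻ s in Ioc ρ r, ENNReal.ofReal (h s)) ≤
      (∫⁻ s in Ioc ρ r, F s ^ (2:ℝ)) ^ (1/(2:ℝ)) * (∫⁻ s in Ioc ρ r, G s ^ (2:ℝ)) ^ (1/(2:ℝ)) := by
    rw [lintegral_congr_ae hFG]
    exact hCS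
  have hpow2 : ∀ a b : ℝ≥0∞, (a ^ (1/(2:ℝ)) * b ^ (1/(2:ℝ)))^(2:ℕ) = a * b := by
    intro a b
    rw [mul_pow, ← ENNReal.rpow_natCast (a ^ (1/(2:ℝ))) 2,
      ← ENNReal.rpow_natCast (b ^ (1/(2:ℝ))) 2, ← ENNReal.rpow_mul, ← ENNReal.rpow_mul]
    norm_num
  calc (∫⁻ s in Ioc ρ r, ENNReal.ofReal (h s)) ^ (2:ℕ)
      ≤ ((∫⁻ s in Ioc ρ r, F s ^ (2:ℝ)) ^ (1/(2:ℝ)) *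
          (∫⁻ s in Ioc ρ r, G s ^ (2:ℝ)) ^ (1/(2:ℝ)))^(2:ℕ) := pow_le_pow_left' hX 2
    _ = (∫⁻ s in Ioc ρ r, F s ^ (2:ℝ)) * (∫⁻ s in Ioc ρ r, G s ^ (2:ℝ)) := hpow2 _ _
    _ = (∫⁻ s in Ioc ρ r, ENNReal.ofReal (s ^ (1 - (d:ℝ)))) *
        (∫⁻ s in Ioc ρ r, ENNReal.ofReal (s ^ ((d:ℝ) - 1)) * ENNReal.ofReal (h s ^ 2)) := by
        congr 1
        · refine lintegral_congr_ae ?_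
          filter_upwards [ae_restrict_mem measurableSet_Ioc] with s hs
          have hs0 : 0 < s := hρ.trans hs.1
          simp only [hF]
          rw [ENNReal.ofReal_rpow_of_nonneg (Real.rpow_nonneg hs0.le _) (by norm_num),
            ← Real.rpow_mul hs0.le, div_mul_cancel₀ _ (two_ne_zero (α := ℝ))]
        · refine lintegral_congr_ae ?_
          filter_upwards [ae_restrict_mem measurableSet_Ioc] with s hs
          have hs0 : 0 < s := hρ.trans hs.1
          simp only [hG]
          rw [ENNReal.mul_rpow_of_nonneg _ _ (by norm_num : (0:ℝ) ≤ 2),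
            ENNReal.ofReal_rpow_of_nonneg (Real.rpow_nonneg hs0.le _) (by norm_num),
            ENNReal.ofReal_rpow_of_nonneg (norm_nonneg _) (by norm_num),
            ← Real.rpow_mul hs0.le, div_mul_cancel₀ _ (two_ne_zero (α := ℝ)),
            show ((2:ℝ) = ((2:ℕ):ℝ)) from by norm_num, Real.rpow_natCast]
    _ ≤ (∫⁻ s in Ioc ρ R, ENNReal.ofReal (s ^ (1 - (d:ℝ)))) *
        (∫⁻ s in Ioc ρ R, ENNReal.ofReal (s ^ ((d:ℝ) - 1)) * ENNReal.ofReal (h s ^ 2)) := by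
        apply mul_le_mul' <;> exact lintegral_mono_set (Set.Ioc_subset_Ioc_right hr2)

lemma key (d : ℕ) (hd : 2 ≤ d) (ρ R : ℝ) (hρ : 0 < ρ) (hR : ρ ≤ R)
    (v : EuclideanSpace ℝ (Fin d) → ℝ) (hv : ContDiff ℝ 1 v)
    (h0 : ∀ y ∈ ball (0 : EuclideanSpace ℝ (Fin d)) ρ, v y = 0) :
    (∫ x in ball (0 : EuclideanSpace ℝ (Fin d)) R \ ball 0 ρ, (v x)^2) ≤
      (∫ r in ρ..R, r ^ ((d:ℝ) - 1)) * (∫ s in ρ..R, s ^ (1 - (d:ℝ))) *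
        ∫ x in ball (0 : EuclideanSpace ℝ (Fin d)) R \ ball 0 ρ, ‖fderiv ℝ v x‖^2 := by
  haveI : Nontrivial (EuclideanSpace ℝ (Fin d)) := euclid_nontrivial d hd
  have hpow : ∀ s : ℝ, s ^ ((d:ℝ) - 1) = s ^ (d - 1 : ℕ) := by
    intro s
    rw [← Real.rpow_natCast s (d - 1)]
    congr 1
    push_cast [Nat.cast_sub (by omega : 1 ≤ d)]
    ring
  set S : Set (EuclideanSpace ℝ (Fin d)) := ball 0 R \ ball 0 ρ with hS
  set S' : Set (EuclideanSpace ℝ (Fin d)) := closedBall 0 R \ closedBall 0 ρ with hS'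
  have hSm : MeasurableSet S := (measurableSet_ball).diff measurableSet_ball
  have hS'm : MeasurableSet S' := measurableSet_closedBall.diff measurableSet_closedBall
  have hvc : Continuous v := hv.continuous
  have hgc : Continuous fun x => ‖fderiv ℝ v x‖^2 := ((hv.continuous_fderiv one_ne_zero).norm).pow 2
  set g : EuclideanSpace ℝ (Fin d) → ℝ≥0∞ := fun x => ENNReal.ofReal (‖fderiv ℝ v x‖^2) with hg
  have hgm : Measurable g := ENNReal.measurable_ofReal.comp hgc.measurable
  set A : ℝ := ∫ r in ρ..R, r ^ ((d:ℝ) - 1) with hA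
  set B : ℝ := ∫ s in ρ..R, s ^ (1 - (d:ℝ)) with hB
  have hA0 : 0 ≤ A := intervalIntegral.integral_nonneg hR
    (fun s hs => Real.rpow_nonneg (hρ.le.trans hs.1) _)
  have hB0 : 0 ≤ B := intervalIntegral.integral_nonneg hR
    (fun s hs => Real.rpow_nonneg (hρ.le.trans hs.1) _)
  -- integrability of the pieces
  have hBint : IntervalIntegrable (fun s : ℝ => s ^ (1 - (d:ℝ))) volume ρ R := by
    apply ContinuousOn.intervalIntegrable
    intro x hx
    rw [uIcc_of_le hR] at hx
    exact (Real.continuousAt_rpow_const x _ (Or.inl (hρ.trans_le hx.1).ne')).continuousWithinAt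
  have hAint : IntervalIntegrable (fun r : ℝ => (r : ℝ) ^ (d - 1 : ℕ)) volume ρ R :=
    (continuous_pow _).intervalIntegrable _ _
  -- lintegral versions of A and B
  have hAeq : (∫⁻ r in Ioc ρ R, ENNReal.ofReal (r ^ (d - 1 : ℕ))) = ENNReal.ofReal A := by
    rw [hA]
    simp only [hpow]
    rw [intervalIntegral.integral_of_le hR,
      ofReal_integral_eq_lintegral_ofReal hAint.1 ?_]
    filter_upwards [ae_restrict_mem measurableSet_Ioc] with s hs
    exact pow_nonneg (hρ.le.trans hs.1.le) _
  have hBeq : (∫⁻ s in Ioc ρ R, ENNReal.ofReal (s ^ (1 - (d:ℝ)))) = ENNReal.ofReal B := by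
    rw [hB, intervalIntegral.integral_of_le hR,
      ofReal_integral_eq_lintegral_ofReal hBint.1 ?_]
    filter_upwards [ae_restrict_mem measurableSet_Ioc] with s hs
    exact Real.rpow_nonneg (hρ.le.trans hs.1.le) _
  -- finiteness of gradient lintegral
  have hgint : IntegrableOn (fun x => ‖fderiv ℝ v x‖^2) S volume := by
    apply (hgc.continuousOn.integrableOn_compact (isCompact_closedBall
      (0 : EuclideanSpace ℝ (Fin d)) R)).mono_set
    intro x hx
    exact mem_closedBall_zero_iff.mpr (le_of_lt (mem_ball_zero_iff.mp hx.1))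
  have hgfin : (∫⁻ x in S, g x) ≠ ⊤ := hgint.lintegral_lt_top.ne
  -- the G function
  set G : sphere (0 : EuclideanSpace ℝ (Fin d)) 1 → ℝ≥0∞ := fun ω =>
    ∫⁻ s in Ioc ρ R, ENNReal.ofReal (s ^ (d - 1 : ℕ)) *
      ENNReal.ofReal (‖fderiv ℝ v (s • (ω : EuclideanSpace ℝ (Fin d)))‖^2) with hG
  -- norm of r • ω
  have hnorm : ∀ (ω : sphere (0 : EuclideanSpace ℝ (Fin d)) 1) (r : ℝ), 0 < r →
      ‖r • (ω : EuclideanSpace ℝ (Fin d))‖ = r := by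
    intro ω r hr
    have := mem_sphere_zero_iff_norm.mp ω.2
    rw [norm_smul, this, Real.norm_eq_abs, abs_of_pos hr, mul_one]
  -- Main claim in ℝ≥0∞
  have claim : (∫⁻ x in S, ENNReal.ofReal ((v x)^2)) ≤
      ENNReal.ofReal A * ENNReal.ofReal B * ∫⁻ x in S, g x := by
    have h1 : (∫⁻ x in S, ENNReal.ofReal ((v x)^2)) =
        ∫⁻ x, S.indicator (fun x => ENNReal.ofReal ((v x)^2)) x := by
      rw [lintegral_indicator hSm]
    rw [h1, lintegral_polar d hd (S.indicator fun x => ENNReal.ofReal ((v x)^2)) (by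
      exact (ENNReal.measurable_ofReal.comp ((hvc.pow 2).measurable)).indicator hSm)]
    have h2 : ∀ ω : sphere (0 : EuclideanSpace ℝ (Fin d)) 1,
        (∫⁻ r in Ioi (0:ℝ), ENNReal.ofReal (r ^ (d - 1)) *
          S.indicator (fun x => ENNReal.ofReal ((v x)^2)) (r • (ω : EuclideanSpace ℝ (Fin d))))
        ≤ ENNReal.ofReal A * (ENNReal.ofReal B * G ω) := by
      intro ω
      have heq : ∀ r ∈ Ioi (0:ℝ),
          ENNReal.ofReal (r ^ (d - 1)) *
            S.indicator (fun x => ENNReal.ofReal ((v x)^2)) (r • (ω : EuclideanSpace ℝ (Fin d)))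
          = (Ico ρ R).indicator (fun r => ENNReal.ofReal (r ^ (d - 1)) *
              ENNReal.ofReal ((v (r • (ω : EuclideanSpace ℝ (Fin d))))^2)) r := by
        intro r hr
        rcases Classical.em (r ∈ Ico ρ R) with hmem | hmem
        · rw [indicator_of_mem hmem, indicator_of_mem]
          rw [hS, mem_diff, mem_ball_zero_iff, mem_ball_zero_iff, hnorm ω r hr]
          exact ⟨hmem.2, not_lt.mpr hmem.1⟩
        · rw [indicator_of_notMem hmem, indicator_of_notMem, mul_zero]
          rw [hS, mem_diff, mem_ball_zero_iff, mem_ball_zero_iff, hnorm ω r hr]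
          intro hc
          exact hmem ⟨not_lt.mp hc.2, hc.1⟩
      rw [setLIntegral_congr_fun measurableSet_Ioi heq]
      rw [lintegral_indicator measurableSet_Ico, Measure.restrict_restrict measurableSet_Ico]
      have hinter : Ico ρ R ∩ Ioi (0:ℝ) = Ico ρ R := by
        apply inter_eq_left.mpr
        intro x hx
        exact hρ.trans_le hx.1
      rw [hinter]
      calc ∫⁻ r in Ico ρ R, ENNReal.ofReal (r ^ (d - 1)) *
              ENNReal.ofReal ((v (r • (ω : EuclideanSpace ℝ (Fin d))))^2)
          ≤ ∫⁻ r in Ico ρ R, ENNReal.ofReal (r ^ (d - 1)) * (ENNReal.ofReal B * G ω) := by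
            apply lintegral_mono_ae
            filter_upwards [ae_restrict_mem measurableSet_Ico] with r hr
            apply mul_le_mul_right ?_ _
            have hb := pointwise_bound d hd ρ R hρ hR v hv h0
              (ω : EuclideanSpace ℝ (Fin d)) (mem_sphere_zero_iff_norm.mp ω.2) r
              ⟨hr.1, hr.2.le⟩
            refine hb.trans ?_
            rw [hBeq, hG]
            apply mul_le_mul_right
            apply lintegral_mono
            intro s
            dsimp only
            rw [hpow s]
          _ = (∫⁻ r in Ico ρ R, ENNReal.ofReal (r ^ (d - 1))) * (ENNReal.ofReal B * G ω) := by
            have hm : Measurable fun r : ℝ => ENNReal.ofReal (r ^ (d - 1 : ℕ)) := by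
              exact ENNReal.measurable_ofReal.comp (continuous_pow _).measurable
            rw [lintegral_mul_const _ hm]
          _ = ENNReal.ofReal A * (ENNReal.ofReal B * G ω) := by
            congr 1
            rw [← hAeq]
            apply setLIntegral_congr
            exact Ico_ae_eq_Ioc
    calc (∫⁻ ω : sphere (0 : EuclideanSpace ℝ (Fin d)) 1,
            ∫⁻ r in Ioi (0:ℝ), ENNReal.ofReal (r ^ (d - 1)) *
              S.indicator (fun x => ENNReal.ofReal ((v x)^2))
                (r • (ω : EuclideanSpace ℝ (Fin d)))
            ∂volume ∂((volume : Measure (EuclideanSpace ℝ (Fin d))).toSphere))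
        ≤ ∫⁻ ω, ENNReal.ofReal A * (ENNReal.ofReal B * G ω)
            ∂((volume : Measure (EuclideanSpace ℝ (Fin d))).toSphere) :=
          lintegral_mono h2
      _ = ENNReal.ofReal A * ENNReal.ofReal B *
            ∫⁻ ω, G ω ∂((volume : Measure (EuclideanSpace ℝ (Fin d))).toSphere) := by
          rw [lintegral_const_mul' _ _ ENNReal.ofReal_ne_top,
            lintegral_const_mul' _ _ ENNReal.ofReal_ne_top, mul_assoc]
      _ = ENNReal.ofReal A * ENNReal.ofReal B * ∫⁻ x in S, g x := by
          congr 1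
          have h3 : (∫⁻ x in S', g x) = ∫⁻ x, S'.indicator g x := by
            rw [lintegral_indicator hS'm]
          have h4 := lintegral_polar d hd (S'.indicator g) (hgm.indicator hS'm)
          have h5 : ∀ ω : sphere (0 : EuclideanSpace ℝ (Fin d)) 1,
              (∫⁻ r in Ioi (0:ℝ), ENNReal.ofReal (r ^ (d - 1)) *
                S'.indicator g (r • (ω : EuclideanSpace ℝ (Fin d)))) = G ω := by
            intro ω
            have heq : ∀ r ∈ Ioi (0:ℝ),
                ENNReal.ofReal (r ^ (d - 1)) *
                  S'.indicator g (r • (ω : EuclideanSpace ℝ (Fin d)))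
                = (Ioc ρ R).indicator (fun r => ENNReal.ofReal (r ^ (d - 1)) *
                    g (r • (ω : EuclideanSpace ℝ (Fin d)))) r := by
              intro r hr
              rcases Classical.em (r ∈ Ioc ρ R) with hmem | hmem
              · rw [indicator_of_mem hmem, indicator_of_mem]
                rw [hS', mem_diff, mem_closedBall_zero_iff, mem_closedBall_zero_iff,
                  hnorm ω r hr]
                exact ⟨hmem.2, not_le.mpr hmem.1⟩
              · rw [indicator_of_notMem hmem, indicator_of_notMem, mul_zero]
                rw [hS', mem_diff, mem_closedBall_zero_iff, mem_closedBall_zero_iff,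
                  hnorm ω r hr]
                intro hc
                exact hmem ⟨not_le.mp hc.2, hc.1⟩
            rw [setLIntegral_congr_fun measurableSet_Ioi heq]
            rw [lintegral_indicator measurableSet_Ioc,
              Measure.restrict_restrict measurableSet_Ioc]
            have hinter : Ioc ρ R ∩ Ioi (0:ℝ) = Ioc ρ R :=
              inter_eq_left.mpr fun x hx => hρ.trans hx.1
            rw [hinter, hG]
          rw [lintegral_congr h5] at h4
          rw [← h4, ← h3]
          apply setLIntegral_congr
          have hsub1 : S' \ S ⊆ sphere (0 : EuclideanSpace ℝ (Fin d)) R := by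
            intro x hx
            obtain ⟨hx1, hx2⟩ := hx
            rw [mem_sphere_zero_iff_norm]
            rw [hS', mem_diff, mem_closedBall_zero_iff, mem_closedBall_zero_iff, not_le] at hx1
            rw [hS, mem_diff, mem_ball_zero_iff, mem_ball_zero_iff] at hx2
            apply le_antisymm hx1.1
            by_contra hlt
            push_neg at hlt
            exact hx2 ⟨hlt, not_lt.mpr hx1.2.le⟩
          have hsub2 : S \ S' ⊆ sphere (0 : EuclideanSpace ℝ (Fin d)) ρ := by
            intro x hx
            obtain ⟨hx1, hx2⟩ := hx
            rw [mem_sphere_zero_iff_norm]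
            rw [hS, mem_diff, mem_ball_zero_iff, mem_ball_zero_iff, not_lt] at hx1
            rw [hS', mem_diff, mem_closedBall_zero_iff, mem_closedBall_zero_iff] at hx2
            refine le_antisymm ?_ hx1.2
            by_contra hgt
            push_neg at hgt
            exact hx2 ⟨hx1.1.le, not_le.mpr hgt⟩
          exact MeasureTheory.ae_eq_set.mpr
            ⟨measure_mono_null hsub1 (Measure.addHaar_sphere volume 0 R),
             measure_mono_null hsub2 (Measure.addHaar_sphere volume 0 ρ)⟩
  -- convert to Bochner integrals
  have hL : (∫ x in S, (v x)^2) = (∫⁻ x in S, ENNReal.ofReal ((v x)^2)).toReal := by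
    rw [integral_eq_lintegral_of_nonneg_ae (Filter.Eventually.of_forall fun x => sq_nonneg _)
      ((hvc.pow 2).aestronglyMeasurable)]
  have hRR : (∫ x in S, ‖fderiv ℝ v x‖^2) = (∫⁻ x in S, g x).toReal := by
    rw [integral_eq_lintegral_of_nonneg_ae (Filter.Eventually.of_forall fun x => sq_nonneg _)
      (hgc.aestronglyMeasurable)]
  rw [hL, hRR]
  calc (∫⁻ x in S, ENNReal.ofReal ((v x)^2)).toReal
      ≤ (ENNReal.ofReal A * ENNReal.ofReal B * ∫⁻ x in S, g x).toReal := by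
        apply ENNReal.toReal_mono ?_ claim
        exact ENNReal.mul_ne_top (ENNReal.mul_ne_top ENNReal.ofReal_ne_top
          ENNReal.ofReal_ne_top) hgfin
    _ = A * B * (∫⁻ x in S, g x).toReal := by
        rw [ENNReal.toReal_mul, ENNReal.toReal_mul, ENNReal.toReal_ofReal hA0,
          ENNReal.toReal_ofReal hB0]

theorem stmt_1 (d : ℕ) (hd : 2 ≤ d) :
    ∃ C > 0, ∀ (δ₁ a ε : ℝ), 0 < δ₁ * a → δ₁ * a ≤ 2 * ε →
      ∀ x₀ : EuclideanSpace ℝ (Fin d), ∀ u : EuclideanSpace ℝ (Fin d) → ℝ,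
      ContDiff ℝ 1 u → (∀ x ∈ ball x₀ (δ₁ * a), u x = 0) →
      (∫ x in ball x₀ (2 * ε) \ ball x₀ (δ₁ * a), (u x) ^ 2) ≤
        C * (∫ r in (δ₁ * a)..(2 * ε), r ^ ((d : ℝ) - 1)) *
          (∫ s in (δ₁ * a)..(2 * ε), s ^ (1 - (d : ℝ))) *
          ∫ x in ball x₀ (2 * ε) \ ball x₀ (δ₁ * a), ‖fderiv ℝ u x‖ ^ 2 := by
  refine ⟨1, one_pos, ?_⟩
  intro δ₁ a ε hρ hR x₀ u hu h0
  set ρ := δ₁ * a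
  set R := 2 * ε
  set v : EuclideanSpace ℝ (Fin d) → ℝ := fun y => u (x₀ + y) with hv
  have hvC : ContDiff ℝ 1 v := hu.comp (contDiff_const.add contDiff_id)
  have hv0 : ∀ y ∈ ball (0 : EuclideanSpace ℝ (Fin d)) ρ, v y = 0 := by
    intro y hy
    apply h0
    rw [mem_ball, dist_eq_norm, add_sub_cancel_left]
    exact mem_ball_zero_iff.mp hy
  have hfd : ∀ y, fderiv ℝ v y = fderiv ℝ u (x₀ + y) := by
    intro y
    have h1 : HasFDerivAt v ((fderiv ℝ u (x₀ + y)).comp (ContinuousLinearMap.id ℝ _)) y :=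
      ((hu.differentiable one_ne_zero (x₀ + y)).hasFDerivAt).comp y ((hasFDerivAt_id y).const_add x₀)
    rw [h1.fderiv, ContinuousLinearMap.comp_id]
  -- transfer set integrals via translation
  have hmp : MeasurePreserving (fun y : EuclideanSpace ℝ (Fin d) => x₀ + y) volume volume :=
    measurePreserving_add_left volume x₀
  have hemb : MeasurableEmbedding (fun y : EuclideanSpace ℝ (Fin d) => x₀ + y) :=
    (MeasurableEquiv.addLeft x₀).measurableEmbedding
  have hpre : (fun y : EuclideanSpace ℝ (Fin d) => x₀ + y) ⁻¹' (ball x₀ R \ ball x₀ ρ)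
      = ball (0 : EuclideanSpace ℝ (Fin d)) R \ ball 0 ρ := by
    ext y
    simp only [mem_preimage, mem_diff, mem_ball, dist_eq_norm, add_sub_cancel_left,
      mem_ball_zero_iff, sub_zero]
  have ht1 : (∫ x in ball x₀ R \ ball x₀ ρ, (u x)^2)
      = ∫ y in ball (0 : EuclideanSpace ℝ (Fin d)) R \ ball 0 ρ, (v y)^2 := by
    rw [← hmp.setIntegral_preimage_emb hemb (fun x => (u x)^2) _, hpre]
  have ht2 : (∫ x in ball x₀ R \ ball x₀ ρ, ‖fderiv ℝ u x‖^2)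
      = ∫ y in ball (0 : EuclideanSpace ℝ (Fin d)) R \ ball 0 ρ, ‖fderiv ℝ v y‖^2 := by
    rw [← hmp.setIntegral_preimage_emb hemb (fun x => ‖fderiv ℝ u x‖^2) _, hpre]
    apply setIntegral_congr_fun ((measurableSet_ball).diff measurableSet_ball)
    intro y _
    simp only [hfd y]
  rw [ht1, ht2, one_mul]
  exact key d hd ρ R hρ hR v hvC hv0
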